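/- arXiv:1711.08670 — 3 statements merged into one kernel-verified Lean document; each statement's English description precedes it below -/
import Mathlib

section
/- In the BMW algebra, the elements e_i satisfy e_i e_{i+1} e_i = e_i for i = 1,…,n−2. -/
noncomputable section

open FreeAlgebra

/-- In the free algebra on generators `inl i ↦ s_i`, `inr i ↦ s_i⁻¹`, the element
`z·e_i = s_i⁻¹ - s_i + z·1`. -/
def BMWe (C : Type) [CommRing C] (z : Cˣ) {n : ℕ} (i : Fin n) :
    FreeAlgebra C (Fin n ⊕ Fin n) :=
  ι C (Sum.inr i) - ι C (Sum.inl i) + (z : C) • 1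

/-- Defining relations of the Birman–Murakami–Wenzl algebra with `n` generators
`s_1, …, s_n` (the paper's `BMW_{n+1}`), over a commutative ring `C` with invertible
parameters `a` and `z` (in the paper `z = q - q⁻¹`).  The relations involving
`e_i = (s_i⁻¹ - s_i)/z + 1` are written multiplied through by the unit `z`,
using `z·e_i = s_i⁻¹ - s_i + z·1`, which is equivalent since `z` is invertible. -/
inductive BMWRel (C : Type) [CommRing C] (a z : Cˣ) (n : ℕ) :
    FreeAlgebra C (Fin n ⊕ Fin n) → FreeAlgebra C (Fin n ⊕ Fin n) → Prop
  | mul_inv (i : Fin n) :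
      BMWRel C a z n (ι C (Sum.inl i) * ι C (Sum.inr i)) 1
  | inv_mul (i : Fin n) :
      BMWRel C a z n (ι C (Sum.inr i) * ι C (Sum.inl i)) 1
  | comm (i j : Fin n) (h : (i : ℕ) + 2 ≤ (j : ℕ)) :
      BMWRel C a z n (ι C (Sum.inl i) * ι C (Sum.inl j))
        (ι C (Sum.inl j) * ι C (Sum.inl i))
  | braid (i j : Fin n) (h : (j : ℕ) = (i : ℕ) + 1) :
      BMWRel C a z n (ι C (Sum.inl i) * ι C (Sum.inl j) * ι C (Sum.inl i))
        (ι C (Sum.inl j) * ι C (Sum.inl i) * ι C (Sum.inl j))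
  | es (i : Fin n) :
      BMWRel C a z n (BMWe C z i * ι C (Sum.inl i)) (((a⁻¹ : Cˣ) : C) • BMWe C z i)
  | ese (i j : Fin n) (h : (j : ℕ) = (i : ℕ) + 1) :
      BMWRel C a z n (BMWe C z i * ι C (Sum.inl j) * BMWe C z i)
        (((z : C) * (a : C)) • BMWe C z i)
  | esinve (i j : Fin n) (h : (j : ℕ) = (i : ℕ) + 1) :
      BMWRel C a z n (BMWe C z i * ι C (Sum.inr j) * BMWe C z i)
        (((z : C) * ((a⁻¹ : Cˣ) : C)) • BMWe C z i)

/-- The Birman–Murakami–Wenzl algebra with `n` generators (the paper's `BMW_{n+1}`). -/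
abbrev BMW (C : Type) [CommRing C] (a z : Cˣ) (n : ℕ) : Type :=
  RingQuot (BMWRel C a z n)

variable {C : Type} [CommRing C] {a z : Cˣ} {n : ℕ}

/-- The generator `s_{i+1}`. -/
def BMW.S (i : Fin n) : BMW C a z n :=
  RingQuot.mkAlgHom C (BMWRel C a z n) (ι C (Sum.inl i))

/-- The inverse generator `s_{i+1}⁻¹`. -/
def BMW.Sinv (i : Fin n) : BMW C a z n :=
  RingQuot.mkAlgHom C (BMWRel C a z n) (ι C (Sum.inr i))

/-- The element `e_{i+1} = (s_{i+1}⁻¹ - s_{i+1})/z + 1`. -/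
def BMW.e (i : Fin n) : BMW C a z n :=
  ((z⁻¹ : Cˣ) : C) • (BMW.Sinv i - BMW.S i) + 1

lemma BMW.S_mul_Sinv (i : Fin n) : BMW.S (a := a) (z := z) i * BMW.Sinv i = 1 := by
  have := RingQuot.mkAlgHom_rel C (BMWRel.mul_inv (C := C) (a := a) (z := z) i)
  simp only [map_mul, map_one] at this
  exact this

lemma BMW.Sinv_mul_S (i : Fin n) : BMW.Sinv (a := a) (z := z) i * BMW.S i = 1 := by
  have := RingQuot.mkAlgHom_rel C (BMWRel.inv_mul (C := C) (a := a) (z := z) i)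
  simp only [map_mul, map_one] at this
  exact this

/-- The generator `s_{i+1}` as a unit. -/
def BMW.sU (i : Fin n) : (BMW C a z n)ˣ :=
  ⟨BMW.S i, BMW.Sinv i, BMW.S_mul_Sinv i, BMW.Sinv_mul_S i⟩

lemma BMW.S_comm (i j : Fin n) (h : (i : ℕ) + 2 ≤ (j : ℕ)) :
    BMW.S (a := a) (z := z) i * BMW.S j = BMW.S j * BMW.S i := by
  have := RingQuot.mkAlgHom_rel C (BMWRel.comm (C := C) (a := a) (z := z) i j h)
  simp only [map_mul] at this
  exact this

lemma BMW.S_braid (i j : Fin n) (h : (j : ℕ) = (i : ℕ) + 1) :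
    BMW.S (a := a) (z := z) i * BMW.S j * BMW.S i = BMW.S j * BMW.S i * BMW.S j := by
  have := RingQuot.mkAlgHom_rel C (BMWRel.braid (C := C) (a := a) (z := z) i j h)
  simp only [map_mul] at this
  exact this

/-- The image of `z·e_i` in the BMW algebra. -/
lemma BMW.mk_BMWe (i : Fin n) :
    RingQuot.mkAlgHom C (BMWRel C a z n) (BMWe C z i)
      = BMW.Sinv i - BMW.S i + (z : C) • 1 := by
  simp only [BMWe, map_add, map_sub, map_smul, map_one]
  rfl

lemma BMW.Es (i : Fin n) :
    (BMW.Sinv (a := a) (z := z) i - BMW.S i + (z : C) • 1) * BMW.S i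
      = ((a⁻¹ : Cˣ) : C) • (BMW.Sinv i - BMW.S i + (z : C) • 1) := by
  have := RingQuot.mkAlgHom_rel C (BMWRel.es (C := C) (a := a) (z := z) i)
  simp only [map_mul, map_smul, BMW.mk_BMWe] at this
  exact this

lemma BMW.EsE (i j : Fin n) (h : (j : ℕ) = (i : ℕ) + 1) :
    (BMW.Sinv (a := a) (z := z) i - BMW.S i + (z : C) • 1) * BMW.S j *
        (BMW.Sinv i - BMW.S i + (z : C) • 1)
      = ((z : C) * (a : C)) • (BMW.Sinv i - BMW.S i + (z : C) • 1) := by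
  have := RingQuot.mkAlgHom_rel C (BMWRel.ese (C := C) (a := a) (z := z) i j h)
  simp only [map_mul, map_smul, BMW.mk_BMWe] at this
  exact this

lemma BMW.EsinvE (i j : Fin n) (h : (j : ℕ) = (i : ℕ) + 1) :
    (BMW.Sinv (a := a) (z := z) i - BMW.S i + (z : C) • 1) * BMW.Sinv j *
        (BMW.Sinv i - BMW.S i + (z : C) • 1)
      = ((z : C) * ((a⁻¹ : Cˣ) : C)) • (BMW.Sinv i - BMW.S i + (z : C) • 1) := by
  have := RingQuot.mkAlgHom_rel C (BMWRel.esinve (C := C) (a := a) (z := z) i j h)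
  simp only [map_mul, map_smul, BMW.mk_BMWe] at this
  exact this

/-- The natural embedding `BMW_{m+1} → BMW_{n+1}` (`ι` iterated). -/
def BMW.ιle {m n : ℕ} (h : m ≤ n) : BMW C a z m →ₐ[C] BMW C a z n :=
  RingQuot.liftAlgHom C ⟨FreeAlgebra.lift C
      (Sum.elim (fun i => BMW.S (Fin.castLE h i)) (fun i => BMW.Sinv (Fin.castLE h i))), by
    rintro x y hxy
    induction hxy with
    | mul_inv i =>
        simp only [map_mul, map_one, FreeAlgebra.lift_ι_apply, Sum.elim_inl, Sum.elim_inr]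
        exact BMW.S_mul_Sinv _
    | inv_mul i =>
        simp only [map_mul, map_one, FreeAlgebra.lift_ι_apply, Sum.elim_inl, Sum.elim_inr]
        exact BMW.Sinv_mul_S _
    | comm i j hij =>
        simp only [map_mul, FreeAlgebra.lift_ι_apply, Sum.elim_inl]
        exact BMW.S_comm _ _ (by simpa using hij)
    | braid i j hij =>
        simp only [map_mul, FreeAlgebra.lift_ι_apply, Sum.elim_inl]
        exact BMW.S_braid _ _ (by simpa using hij)
    | es i =>
        simp only [BMWe, map_mul, map_add, map_sub, map_one, map_smul,
          FreeAlgebra.lift_ι_apply, Sum.elim_inl, Sum.elim_inr]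
        exact BMW.Es _
    | ese i j hij =>
        simp only [BMWe, map_mul, map_add, map_sub, map_one, map_smul,
          FreeAlgebra.lift_ι_apply, Sum.elim_inl, Sum.elim_inr]
        exact BMW.EsE _ _ (by simpa using hij)
    | esinve i j hij =>
        simp only [BMWe, map_mul, map_add, map_sub, map_one, map_smul,
          FreeAlgebra.lift_ι_apply, Sum.elim_inl, Sum.elim_inr]
        exact BMW.EsinvE _ _ (by simpa using hij)⟩


lemma BMW.ESinv (i : Fin n) :
    (BMW.Sinv (a := a) (z := z) i - BMW.S i + (z : C) • 1) * BMW.Sinv i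
      = ((a : Cˣ) : C) • (BMW.Sinv i - BMW.S i + (z : C) • 1) := by
  have h1 : (BMW.Sinv (a := a) (z := z) i - BMW.S i + (z : C) • 1) * BMW.S i * BMW.Sinv i
      = ((a⁻¹ : Cˣ) : C) •
        ((BMW.Sinv (a := a) (z := z) i - BMW.S i + (z : C) • 1) * BMW.Sinv i) := by
    rw [BMW.Es, smul_mul_assoc]
  rw [mul_assoc, BMW.S_mul_Sinv, mul_one] at h1
  calc (BMW.Sinv (a := a) (z := z) i - BMW.S i + (z : C) • 1) * BMW.Sinv i
      = ((a : Cˣ) : C) • (((a⁻¹ : Cˣ) : C) •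
          ((BMW.Sinv (a := a) (z := z) i - BMW.S i + (z : C) • 1) * BMW.Sinv i)) := by
        rw [smul_smul, Units.mul_inv, one_smul]
    _ = _ := by rw [← h1]

/-- Abstract computation: if `E·B·E`, `E·D·E`, `E·E` are multiples of `E`,
then so is `E·(B - D + z·1)·E`. -/
lemma BMW.sandwich_abstract (E B D : BMW C a z n) (u v w : C)
    (hB : E * B * E = u • E) (hD : E * D * E = v • E) (hE2 : E * E = w • E) :
    E * (B - D + (z : C) • 1) * E = (u - v + (z : C) * w) • E := by
  have : E * (B - D + (z : C) • 1) * E = E * B * E - E * D * E + (z : C) • (E * E) := by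
    rw [mul_add, mul_sub, add_mul, sub_mul, mul_smul_comm, mul_one, smul_mul_assoc]
  rw [this, hB, hD, hE2, smul_smul]
  module

lemma BMW.Esq (i : Fin n) :
    (BMW.Sinv (a := a) (z := z) i - BMW.S i + (z : C) • 1) *
        (BMW.Sinv i - BMW.S i + (z : C) • 1)
      = (((a : Cˣ) : C) - ((a⁻¹ : Cˣ) : C) + (z : C)) •
          (BMW.Sinv i - BMW.S i + (z : C) • 1) := by
  have : (BMW.Sinv (a := a) (z := z) i - BMW.S i + (z : C) • 1) *
        (BMW.Sinv i - BMW.S i + (z : C) • 1)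
      = (BMW.Sinv (a := a) (z := z) i - BMW.S i + (z : C) • 1) * BMW.Sinv i -
        (BMW.Sinv (a := a) (z := z) i - BMW.S i + (z : C) • 1) * BMW.S i +
        (z : C) • (BMW.Sinv (a := a) (z := z) i - BMW.S i + (z : C) • 1) := by
    rw [mul_add, mul_sub, mul_smul_comm, mul_one]
  rw [this, BMW.ESinv, BMW.Es]
  module

lemma BMW.Ekey (i j : Fin n) (hij : (j : ℕ) = (i : ℕ) + 1) :
    (BMW.Sinv (a := a) (z := z) i - BMW.S i + (z : C) • 1) *
        (BMW.Sinv j - BMW.S j + (z : C) • 1) *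
        (BMW.Sinv i - BMW.S i + (z : C) • 1)
      = ((z : C) * (z : C)) • (BMW.Sinv i - BMW.S i + (z : C) • 1) := by
  have h := BMW.sandwich_abstract (BMW.Sinv (a := a) (z := z) i - BMW.S i + (z : C) • 1)
    (BMW.Sinv j) (BMW.S j) _ _ _ (BMW.EsinvE i j hij) (BMW.EsE i j hij) (BMW.Esq i)
  rw [h]
  congr 1
  ring

/-- In the BMW algebra, the elements `e_i` satisfy
`e_i e_{i+1} e_i = e_i` for `i = 1, …, n−2`. -/
theorem bmw_e_sandwich (C : Type) [CommRing C] (a q z : Cˣ)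
    (hz : (z : C) = (q : C) - ((q⁻¹ : Cˣ) : C)) (n : ℕ) (i j : Fin n)
    (hij : (j : ℕ) = (i : ℕ) + 1) :
    BMW.e (C := C) (a := a) (z := z) i * BMW.e j * BMW.e i = BMW.e i := by
  have he : BMW.e (C := C) (a := a) (z := z) i
      = ((z⁻¹ : Cˣ) : C) • (BMW.Sinv i - BMW.S i + (z : C) • 1) := by
    rw [BMW.e, smul_add, smul_smul, Units.inv_mul, one_smul]
  have hf : BMW.e (C := C) (a := a) (z := z) j
      = ((z⁻¹ : Cˣ) : C) • (BMW.Sinv j - BMW.S j + (z : C) • 1) := by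
    rw [BMW.e, smul_add, smul_smul, Units.inv_mul, one_smul]
  rw [he, hf]
  simp only [smul_mul_assoc, mul_smul_comm, smul_smul]
  rw [BMW.Ekey i j hij, smul_smul]
  congr 1
  have hz1 : ((z⁻¹ : Cˣ) : C) * (z : C) = 1 := Units.inv_mul z
  linear_combination (((z⁻¹ : Cˣ) : C) * (((z⁻¹ : Cˣ) : C) * (z : C) + 1)) * hz1

end
end

section
/- In the Hecke algebra H_n, a family of linear maps (t_n) satisfying the trace and stabilization properties necessarily satisfies the inclusion property t_{n+1}(ι_n(u)) = δ^H t_n(u) for all u ∈ H_n, where δ^H = (a−a^{−1})/(q−q^{−1}). Consequently the space of Markov traces on the tower of Hecke algebras is one-dimensional, determined by t_1(1). -/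
noncomputable section

/-- Defining relations of the Hecke algebra with `n` generators
(the paper's `H_{n+1}`), over a commutative ring `C` with quadratic
parameter `z` (in the paper `z = q - q⁻¹`). -/
inductive HeckeRel (C : Type) [CommRing C] (z : C) (n : ℕ) :
    FreeAlgebra C (Fin n) → FreeAlgebra C (Fin n) → Prop
  | comm (i j : Fin n) (h : (i : ℕ) + 2 ≤ (j : ℕ)) :
      HeckeRel C z n (FreeAlgebra.ι C i * FreeAlgebra.ι C j)
        (FreeAlgebra.ι C j * FreeAlgebra.ι C i)
  | braid (i j : Fin n) (h : (j : ℕ) = (i : ℕ) + 1) :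
      HeckeRel C z n (FreeAlgebra.ι C i * FreeAlgebra.ι C j * FreeAlgebra.ι C i)
        (FreeAlgebra.ι C j * FreeAlgebra.ι C i * FreeAlgebra.ι C j)
  | quad (i : Fin n) :
      HeckeRel C z n (FreeAlgebra.ι C i * FreeAlgebra.ι C i)
        (1 + z • FreeAlgebra.ι C i)

/-- The Hecke algebra with `n` generators `σ_1, …, σ_n` (the paper's `H_{n+1}`). -/
abbrev Hecke (C : Type) [CommRing C] (z : C) (n : ℕ) : Type :=
  RingQuot (HeckeRel C z n)

variable {C : Type} [CommRing C] {z : C} {n : ℕ}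

/-- The generator `σ_{i+1}` of the Hecke algebra. -/
def Hecke.σ (i : Fin n) : Hecke C z n :=
  RingQuot.mkAlgHom C (HeckeRel C z n) (FreeAlgebra.ι C i)

lemma Hecke.σ_comm (i j : Fin n) (h : (i : ℕ) + 2 ≤ (j : ℕ)) :
    Hecke.σ (z := z) i * Hecke.σ j = Hecke.σ j * Hecke.σ i := by
  have := RingQuot.mkAlgHom_rel C (HeckeRel.comm (C := C) (z := z) i j h)
  simp only [map_mul] at this
  exact this

lemma Hecke.σ_braid (i j : Fin n) (h : (j : ℕ) = (i : ℕ) + 1) :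
    Hecke.σ (z := z) i * Hecke.σ j * Hecke.σ i = Hecke.σ j * Hecke.σ i * Hecke.σ j := by
  have := RingQuot.mkAlgHom_rel C (HeckeRel.braid (C := C) (z := z) i j h)
  simp only [map_mul] at this
  exact this

lemma Hecke.σ_quad (i : Fin n) :
    Hecke.σ (z := z) i * Hecke.σ i = 1 + z • Hecke.σ i := by
  have := RingQuot.mkAlgHom_rel C (HeckeRel.quad (C := C) (z := z) i)
  simp only [map_mul, map_add, map_one, map_smul] at this
  exact this

lemma Hecke.σ_mul_inv (i : Fin n) :
    Hecke.σ (z := z) i * (Hecke.σ i - z • 1) = 1 := by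
  rw [mul_sub, Hecke.σ_quad, mul_smul_comm, mul_one]; abel

lemma Hecke.inv_mul_σ (i : Fin n) :
    (Hecke.σ (z := z) i - z • 1) * Hecke.σ i = 1 := by
  rw [sub_mul, Hecke.σ_quad, smul_mul_assoc, one_mul]; abel

/-- The generator `σ_{i+1}` as a unit. -/
def Hecke.σU (i : Fin n) : (Hecke C z n)ˣ :=
  ⟨Hecke.σ i, Hecke.σ i - z • 1, Hecke.σ_mul_inv i, Hecke.inv_mul_σ i⟩

/-- The natural embedding `H_{m+1} → H_{n+1}` (`ι` iterated). -/
def Hecke.ιle {m n : ℕ} (h : m ≤ n) : Hecke C z m →ₐ[C] Hecke C z n :=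
  RingQuot.liftAlgHom C ⟨FreeAlgebra.lift C (fun i => Hecke.σ (Fin.castLE h i)), by
    rintro x y hxy
    induction hxy with
    | comm i j hij =>
        simp only [map_mul, FreeAlgebra.lift_ι_apply]
        exact Hecke.σ_comm _ _ (by simpa using hij)
    | braid i j hij =>
        simp only [map_mul, FreeAlgebra.lift_ι_apply]
        exact Hecke.σ_braid _ _ (by simpa using hij)
    | quad i =>
        simp only [map_mul, map_add, map_one, map_smul, FreeAlgebra.lift_ι_apply]
        exact Hecke.σ_quad _⟩

/-- The shift morphism `sh^m : H_{l+1} → H_{l+m+1}`, sending `σ_i` to `σ_{i+m}`. -/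
def Hecke.shift (m : ℕ) {l : ℕ} : Hecke C z l →ₐ[C] Hecke C z (m + l) :=
  RingQuot.liftAlgHom C ⟨FreeAlgebra.lift C (fun i => Hecke.σ (Fin.natAdd m i)), by
    rintro x y hxy
    induction hxy with
    | comm i j hij =>
        simp only [map_mul, FreeAlgebra.lift_ι_apply]
        exact Hecke.σ_comm _ _ (by simp [Fin.natAdd]; omega)
    | braid i j hij =>
        simp only [map_mul, FreeAlgebra.lift_ι_apply]
        exact Hecke.σ_braid _ _ (by simp [Fin.natAdd]; omega)
    | quad i =>
        simp only [map_mul, map_add, map_one, map_smul, FreeAlgebra.lift_ι_apply]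
        exact Hecke.σ_quad _⟩


namespace Hecke

@[elab_as_elim]
lemma hecke_induction {p : Hecke C z n → Prop}
    (h0 : ∀ c : C, p (algebraMap C _ c)) (h1 : ∀ i, p (Hecke.σ (z := z) i))
    (hmul : ∀ x y, p x → p y → p (x * y)) (hadd : ∀ x y, p x → p y → p (x + y))
    (x : Hecke C z n) : p x := by
  obtain ⟨y, rfl⟩ := RingQuot.mkAlgHom_surjective C (HeckeRel C z n) x
  induction y using FreeAlgebra.induction with
  | grade0 c => rw [AlgHom.commutes]; exact h0 c
  | grade1 i => exact h1 i
  | mul a b ha hb => rw [map_mul]; exact hmul _ _ ha hb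
  | add a b ha hb => rw [map_add]; exact hadd _ _ ha hb

lemma ιle_σ {m n : ℕ} (h : m ≤ n) (i : Fin m) :
    Hecke.ιle (z := z) h (Hecke.σ i) = Hecke.σ (Fin.castLE h i) := by
  rw [Hecke.ιle, Hecke.σ, RingQuot.liftAlgHom_mkAlgHom_apply, FreeAlgebra.lift_ι_apply]

lemma hom_ext {A : Type} [Semiring A] [Algebra C A] {f g : Hecke C z n →ₐ[C] A}
    (h : ∀ i, f (Hecke.σ (z := z) i) = g (Hecke.σ i)) : f = g := by
  refine AlgHom.ext fun x => ?_
  induction x using hecke_induction with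
  | h0 c => rw [AlgHom.commutes, AlgHom.commutes]
  | h1 i => exact h i
  | hmul x y hx hy => rw [map_mul, map_mul, hx, hy]
  | hadd x y hx hy => rw [map_add, map_add, hx, hy]

lemma ιle_ιle {k m n : ℕ} (h1 : k ≤ m) (h2 : m ≤ n) (u : Hecke C z k) :
    Hecke.ιle (z := z) h2 (Hecke.ιle h1 u) = Hecke.ιle (h1.trans h2) u := by
  have : (Hecke.ιle (z := z) h2).comp (Hecke.ιle h1) = Hecke.ιle (h1.trans h2) :=
    hom_ext fun i => by
      simp only [AlgHom.comp_apply, ιle_σ, Fin.castLE_castLE]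
  exact congrArg (fun f : Hecke C z k →ₐ[C] Hecke C z n => f u) this

lemma commute_ιle {k : ℕ} (h : k ≤ n) (j : Fin n) (hj : k + 1 ≤ (j : ℕ)) (u : Hecke C z k) :
    Commute (Hecke.ιle (z := z) h u) (Hecke.σ j) := by
  induction u using hecke_induction with
  | h0 c => rw [AlgHom.commutes]; exact Algebra.commutes c _
  | h1 i =>
      rw [ιle_σ]
      exact Hecke.σ_comm _ j (by simp only [Fin.coe_castLE]; omega)
  | hmul x y hx hy => rw [map_mul]; exact hx.mul_left hy
  | hadd x y hx hy => rw [map_add]; exact hx.add_left hy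

lemma exists_algebraMap (x : Hecke C z 0) : ∃ c : C, x = algebraMap C _ c := by
  induction x using hecke_induction with
  | h0 c => exact ⟨c, rfl⟩
  | h1 i => exact i.elim0
  | hmul x y hx hy =>
      obtain ⟨c, rfl⟩ := hx; obtain ⟨d, rfl⟩ := hy
      exact ⟨c * d, (map_mul _ _ _).symm⟩
  | hadd x y hx hy =>
      obtain ⟨c, rfl⟩ := hx; obtain ⟨d, rfl⟩ := hy
      exact ⟨c + d, (map_add _ _ _).symm⟩

/-- The span of `ι(H_m)` and `ι(H_m)·σ_m·ι(H_m)` in `H_{m+1}`. -/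
def markovSpan (z : C) (m : ℕ) : Submodule C (Hecke C z (m + 1)) :=
  Submodule.span C
    ({x | ∃ u, x = Hecke.ιle (Nat.le_succ m) u} ∪
      {x | ∃ v w, x = Hecke.ιle (z := z) (Nat.le_succ m) v * Hecke.σ (Fin.last m) *
        Hecke.ιle (Nat.le_succ m) w})

lemma memA {m : ℕ} (u : Hecke C z m) :
    Hecke.ιle (Nat.le_succ m) u ∈ markovSpan z m :=
  Submodule.subset_span (Or.inl ⟨u, rfl⟩)

lemma memB {m : ℕ} (v w : Hecke C z m) :
    Hecke.ιle (Nat.le_succ m) v * Hecke.σ (Fin.last m) * Hecke.ιle (Nat.le_succ m) w ∈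
      markovSpan z m :=
  Submodule.subset_span (Or.inr ⟨v, w, rfl⟩)

lemma mul_left_mem {m : ℕ} (v : Hecke C z m) {x : Hecke C z (m + 1)}
    (hx : x ∈ markovSpan z m) : Hecke.ιle (Nat.le_succ m) v * x ∈ markovSpan z m := by
  induction hx using Submodule.span_induction with
  | mem x hx =>
      rcases hx with ⟨u, rfl⟩ | ⟨a, b, rfl⟩
      · rw [← map_mul]; exact memA _
      · rw [show Hecke.ιle (z := z) (Nat.le_succ m) v *
          (Hecke.ιle (Nat.le_succ m) a * Hecke.σ (Fin.last m) * Hecke.ιle (Nat.le_succ m) b) =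
          Hecke.ιle (Nat.le_succ m) (v * a) * Hecke.σ (Fin.last m) *
            Hecke.ιle (Nat.le_succ m) b by rw [map_mul]; simp only [mul_assoc]]
        exact memB _ _
  | zero => rw [mul_zero]; exact Submodule.zero_mem _
  | add x y _ _ hx hy => rw [mul_add]; exact Submodule.add_mem _ hx hy
  | smul c x _ hx => rw [mul_smul_comm]; exact Submodule.smul_mem _ _ hx

lemma mul_right_mem {m : ℕ} (w : Hecke C z m) {x : Hecke C z (m + 1)}
    (hx : x ∈ markovSpan z m) : x * Hecke.ιle (Nat.le_succ m) w ∈ markovSpan z m := by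
  induction hx using Submodule.span_induction with
  | mem x hx =>
      rcases hx with ⟨u, rfl⟩ | ⟨a, b, rfl⟩
      · rw [← map_mul]; exact memA _
      · rw [mul_assoc, ← map_mul]; exact memB _ _
  | zero => rw [zero_mul]; exact Submodule.zero_mem _
  | add x y _ _ hx hy => rw [add_mul]; exact Submodule.add_mem _ hx hy
  | smul c x _ hx => rw [smul_mul_assoc]; exact Submodule.smul_mem _ _ hx

lemma markovSpan_eq_top_of_key {m : ℕ}
    (key : ∀ x : Hecke C z m, Hecke.σ (Fin.last m) * Hecke.ιle (Nat.le_succ m) x *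
      Hecke.σ (Fin.last m) ∈ markovSpan z m) :
    markovSpan (z := z) m = ⊤ := by
  have one_mem : (1 : Hecke C z (m + 1)) ∈ markovSpan z m := by
    rw [← map_one (Hecke.ιle (z := z) (Nat.le_succ m))]; exact memA _
  -- closure under multiplication
  have mul_mem : ∀ x y : Hecke C z (m + 1), x ∈ markovSpan z m → y ∈ markovSpan z m →
      x * y ∈ markovSpan z m := by
    intro x y hx hy
    induction hx using Submodule.span_induction with
    | mem x hx =>
        induction hy using Submodule.span_induction with
        | mem y hy =>
            rcases hx with ⟨u, rfl⟩ | ⟨a, b, rfl⟩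
            · exact mul_left_mem u (Submodule.subset_span hy)
            · rcases hy with ⟨u, rfl⟩ | ⟨c, d, rfl⟩
              · exact mul_right_mem u (Submodule.subset_span (Or.inr ⟨a, b, rfl⟩))
              · have : Hecke.ιle (z := z) (Nat.le_succ m) a * Hecke.σ (Fin.last m) *
                    Hecke.ιle (Nat.le_succ m) b *
                    (Hecke.ιle (Nat.le_succ m) c * Hecke.σ (Fin.last m) *
                      Hecke.ιle (Nat.le_succ m) d) =
                    Hecke.ιle (Nat.le_succ m) a *
                      (Hecke.σ (Fin.last m) * Hecke.ιle (Nat.le_succ m) (b * c) *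
                        Hecke.σ (Fin.last m)) * Hecke.ιle (Nat.le_succ m) d := by
                  rw [map_mul]; simp only [mul_assoc]
                rw [this]
                exact mul_right_mem d (mul_left_mem a (key (b * c)))
        | zero => rw [mul_zero]; exact Submodule.zero_mem _
        | add y₁ y₂ _ _ h1 h2 => rw [mul_add]; exact Submodule.add_mem _ h1 h2
        | smul c y _ h1 => rw [mul_smul_comm]; exact Submodule.smul_mem _ _ h1
    | zero => rw [zero_mul]; exact Submodule.zero_mem _
    | add x₁ x₂ _ _ h1 h2 => rw [add_mul]; exact Submodule.add_mem _ h1 h2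
    | smul c x _ h1 => rw [smul_mul_assoc]; exact Submodule.smul_mem _ _ h1
  rw [eq_top_iff]
  rintro x -
  induction x using hecke_induction with
  | h0 c =>
      rw [Algebra.algebraMap_eq_smul_one]
      exact Submodule.smul_mem _ _ one_mem
  | h1 i =>
      rcases eq_or_lt_of_le (Nat.lt_succ_iff.mp i.isLt) with hi | hi
      · have : i = Fin.last m := Fin.ext hi
        rw [this, show Hecke.σ (z := z) (Fin.last m) =
          Hecke.ιle (Nat.le_succ m) 1 * Hecke.σ (Fin.last m) * Hecke.ιle (Nat.le_succ m) 1 by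
            rw [map_one, one_mul, mul_one]]
        exact memB _ _
      · have : i = Fin.castLE (Nat.le_succ m) ⟨(i : ℕ), hi⟩ := Fin.ext rfl
        rw [this, ← ιle_σ]
        exact memA _
  | hmul x y hx hy => exact mul_mem _ _ hx hy
  | hadd x y hx hy => exact Submodule.add_mem _ hx hy

lemma markovSpan_eq_top (z : C) : ∀ m : ℕ, markovSpan (z := z) m = ⊤ := by
  intro m
  induction m with
  | zero =>
      apply markovSpan_eq_top_of_key
      intro x
      obtain ⟨c, rfl⟩ := exists_algebraMap x
      rw [AlgHom.commutes, Algebra.algebraMap_eq_smul_one, mul_smul_comm, smul_mul_assoc,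
        mul_one, Hecke.σ_quad]
      refine Submodule.smul_mem _ _ (Submodule.add_mem _ ?_ (Submodule.smul_mem _ _ ?_))
      · rw [← map_one (Hecke.ιle (z := z) (Nat.le_succ 0))]; exact memA _
      · rw [show Hecke.σ (z := z) (Fin.last 0) =
          Hecke.ιle (Nat.le_succ 0) 1 * Hecke.σ (Fin.last 0) * Hecke.ιle (Nat.le_succ 0) 1 by
            rw [map_one, one_mul, mul_one]]
        exact memB _ _
  | succ k ih =>
      apply markovSpan_eq_top_of_key
      intro x
      have hx : x ∈ markovSpan (z := z) k := ih ▸ Submodule.mem_top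
      induction hx using Submodule.span_induction with
      | mem x hxm =>
          rcases hxm with ⟨u, rfl⟩ | ⟨v, w, rfl⟩
          · -- x = ι_k u : commutes with σ_{k+1}
            rw [ιle_ιle]
            have hc := commute_ιle (z := z) (Nat.le_succ k |>.trans (Nat.le_succ (k + 1)))
              (Fin.last (k + 1)) (by simp) u
            have e : Hecke.σ (z := z) (Fin.last (k + 1)) *
                Hecke.ιle ((Nat.le_succ k).trans (Nat.le_succ (k + 1))) u *
                Hecke.σ (Fin.last (k + 1)) =
                Hecke.ιle ((Nat.le_succ k).trans (Nat.le_succ (k + 1))) u *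
                  (Hecke.σ (Fin.last (k + 1)) * Hecke.σ (Fin.last (k + 1))) := by
              rw [hc.symm.eq, mul_assoc]
            rw [e, Hecke.σ_quad, mul_add, mul_one, mul_smul_comm]
            refine Submodule.add_mem _ ?_ (Submodule.smul_mem _ _ ?_)
            · rw [← ιle_ιle (Nat.le_succ k) (Nat.le_succ (k + 1))]; exact memA _
            · rw [show Hecke.ιle (z := z) ((Nat.le_succ k).trans (Nat.le_succ (k + 1))) u *
                Hecke.σ (Fin.last (k + 1)) =
                Hecke.ιle (Nat.le_succ (k + 1)) (Hecke.ιle (Nat.le_succ k) u) *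
                  Hecke.σ (Fin.last (k + 1)) * Hecke.ιle (Nat.le_succ (k + 1)) 1 by
                  rw [ιle_ιle, map_one, mul_one]]
              exact memB _ _
          · -- x = ι_k v * σ_k * ι_k w
            rw [map_mul, map_mul, ιle_ιle, ιle_ιle, ιle_σ]
            have hcv := commute_ιle (z := z) ((Nat.le_succ k).trans (Nat.le_succ (k + 1)))
              (Fin.last (k + 1)) (by simp) v
            have hcw := commute_ιle (z := z) ((Nat.le_succ k).trans (Nat.le_succ (k + 1)))
              (Fin.last (k + 1)) (by simp) w
            have hbraid := Hecke.σ_braid (z := z)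
              (Fin.castLE (Nat.le_succ (k + 1)) (Fin.last k)) (Fin.last (k + 1)) (by simp)
            have key : Hecke.σ (z := z) (Fin.last (k + 1)) *
                (Hecke.ιle ((Nat.le_succ k).trans (Nat.le_succ (k + 1))) v *
                  Hecke.σ (Fin.castLE (Nat.le_succ (k + 1)) (Fin.last k)) *
                  Hecke.ιle ((Nat.le_succ k).trans (Nat.le_succ (k + 1))) w) *
                Hecke.σ (Fin.last (k + 1)) =
                Hecke.ιle ((Nat.le_succ k).trans (Nat.le_succ (k + 1))) v *
                  (Hecke.σ (Fin.castLE (Nat.le_succ (k + 1)) (Fin.last k)) *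
                    Hecke.σ (Fin.last (k + 1)) *
                    Hecke.σ (Fin.castLE (Nat.le_succ (k + 1)) (Fin.last k))) *
                  Hecke.ιle ((Nat.le_succ k).trans (Nat.le_succ (k + 1))) w := by
              calc Hecke.σ (z := z) (Fin.last (k + 1)) *
                  (Hecke.ιle ((Nat.le_succ k).trans (Nat.le_succ (k + 1))) v *
                    Hecke.σ (Fin.castLE (Nat.le_succ (k + 1)) (Fin.last k)) *
                    Hecke.ιle ((Nat.le_succ k).trans (Nat.le_succ (k + 1))) w) *
                  Hecke.σ (Fin.last (k + 1))
                  = Hecke.σ (Fin.last (k + 1)) *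
                      Hecke.ιle ((Nat.le_succ k).trans (Nat.le_succ (k + 1))) v *
                      Hecke.σ (Fin.castLE (Nat.le_succ (k + 1)) (Fin.last k)) *
                      (Hecke.ιle ((Nat.le_succ k).trans (Nat.le_succ (k + 1))) w *
                        Hecke.σ (Fin.last (k + 1))) := by
                    simp only [mul_assoc]
                _ = Hecke.ιle ((Nat.le_succ k).trans (Nat.le_succ (k + 1))) v *
                      Hecke.σ (Fin.last (k + 1)) *
                      Hecke.σ (Fin.castLE (Nat.le_succ (k + 1)) (Fin.last k)) *
                      (Hecke.σ (Fin.last (k + 1)) *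
                        Hecke.ιle ((Nat.le_succ k).trans (Nat.le_succ (k + 1))) w) := by
                    rw [hcv.symm.eq, hcw.eq]
                _ = Hecke.ιle ((Nat.le_succ k).trans (Nat.le_succ (k + 1))) v *
                      (Hecke.σ (Fin.last (k + 1)) *
                        Hecke.σ (Fin.castLE (Nat.le_succ (k + 1)) (Fin.last k)) *
                        Hecke.σ (Fin.last (k + 1))) *
                      Hecke.ιle ((Nat.le_succ k).trans (Nat.le_succ (k + 1))) w := by
                    simp only [mul_assoc]
                _ = Hecke.ιle ((Nat.le_succ k).trans (Nat.le_succ (k + 1))) v *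
                      (Hecke.σ (Fin.castLE (Nat.le_succ (k + 1)) (Fin.last k)) *
                        Hecke.σ (Fin.last (k + 1)) *
                        Hecke.σ (Fin.castLE (Nat.le_succ (k + 1)) (Fin.last k))) *
                      Hecke.ιle ((Nat.le_succ k).trans (Nat.le_succ (k + 1))) w := by
                    rw [hbraid]
            rw [key]
            rw [show Hecke.ιle (z := z) ((Nat.le_succ k).trans (Nat.le_succ (k + 1))) v *
              (Hecke.σ (Fin.castLE (Nat.le_succ (k + 1)) (Fin.last k)) *
                Hecke.σ (Fin.last (k + 1)) *
                Hecke.σ (Fin.castLE (Nat.le_succ (k + 1)) (Fin.last k))) *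
              Hecke.ιle ((Nat.le_succ k).trans (Nat.le_succ (k + 1))) w =
              Hecke.ιle (Nat.le_succ (k + 1))
                  (Hecke.ιle (Nat.le_succ k) v * Hecke.σ (Fin.last k)) *
                Hecke.σ (Fin.last (k + 1)) *
                Hecke.ιle (Nat.le_succ (k + 1))
                  (Hecke.σ (Fin.last k) * Hecke.ιle (Nat.le_succ k) w) by
              rw [map_mul, map_mul, ιle_ιle, ιle_ιle, ιle_σ]; simp only [mul_assoc]]
            exact memB _ _
      | zero => rw [map_zero, mul_zero, zero_mul]; exact Submodule.zero_mem _
      | add x₁ x₂ _ _ h1 h2 =>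
          rw [map_add, mul_add, add_mul]; exact Submodule.add_mem _ h1 h2
      | smul c x _ h1 =>
          rw [map_smul, mul_smul_comm, smul_mul_assoc]; exact Submodule.smul_mem _ _ h1

end Hecke

/-- A Markov trace on the tower of Hecke algebras: a family of `R`-linear maps
`t_n : H_n → R` with the trace property and the (positive and negative) stabilization
properties; here `σ_n⁻¹ = σ_n − z`. -/
def IsHeckeMarkovTrace {C : Type} [CommRing C] (a : Cˣ) (z : C)
    (t : ∀ m : ℕ, Hecke C z m →ₗ[C] C) : Prop :=
  (∀ (m : ℕ) (u v : Hecke C z m), t m (u * v) = t m (v * u)) ∧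
  (∀ (m : ℕ) (u v : Hecke C z m),
    t (m + 1) (Hecke.ιle (Nat.le_succ m) u * Hecke.σ (Fin.last m) *
        Hecke.ιle (Nat.le_succ m) v) = (a : C) * t m (u * v)) ∧
  (∀ (m : ℕ) (u v : Hecke C z m),
    t (m + 1) (Hecke.ιle (Nat.le_succ m) u * (Hecke.σ (Fin.last m) - z • 1) *
        Hecke.ιle (Nat.le_succ m) v) = ((a⁻¹ : Cˣ) : C) * t m (u * v))

lemma markov_trace_inclusion {C : Type} [CommRing C] (a z : Cˣ)
    (t : ∀ m : ℕ, Hecke C (z : C) m →ₗ[C] C)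
    (ht : IsHeckeMarkovTrace a (z : C) t) (m : ℕ) (u : Hecke C (z : C) m) :
    t (m + 1) (Hecke.ιle (Nat.le_succ m) u)
      = (((a : C) - ((a⁻¹ : Cˣ) : C)) * ((z⁻¹ : Cˣ) : C)) * t m u := by
  obtain ⟨htr, hpos, hneg⟩ := ht
  have e1 : t (m + 1) (Hecke.ιle (Nat.le_succ m) u * Hecke.σ (Fin.last m))
      = (a : C) * t m u := by
    have := hpos m u 1
    rwa [map_one, mul_one, mul_one] at this
  have e2 : t (m + 1) (Hecke.ιle (Nat.le_succ m) u * Hecke.σ (Fin.last m))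
      - (z : C) * t (m + 1) (Hecke.ιle (Nat.le_succ m) u)
      = ((a⁻¹ : Cˣ) : C) * t m u := by
    have := hneg m u 1
    rw [map_one, mul_one, mul_one, mul_sub, mul_smul_comm, mul_one, map_sub, map_smul,
      smul_eq_mul] at this
    exact this
  have e3 : (z : C) * t (m + 1) (Hecke.ιle (Nat.le_succ m) u)
      = ((a : C) - ((a⁻¹ : Cˣ) : C)) * t m u := by
    have := congrArg₂ (· - ·) e1 e2
    rw [sub_sub_cancel] at this
    rw [this]; ring
  calc t (m + 1) (Hecke.ιle (Nat.le_succ m) u)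
      = ((z⁻¹ : Cˣ) : C) * ((z : C) * t (m + 1) (Hecke.ιle (Nat.le_succ m) u)) := by
        rw [← mul_assoc, Units.inv_mul, one_mul]
    _ = (((a : C) - ((a⁻¹ : Cˣ) : C)) * ((z⁻¹ : Cˣ) : C)) * t m u := by
        rw [e3]; ring

/-- A family of linear maps on the tower of Hecke algebras satisfying the
trace and stabilization properties necessarily satisfies the inclusion property
`t_{n+1}(ι_n(u)) = δ^H t_n(u)` with `δ^H = (a−a⁻¹)/(q−q⁻¹)`; consequently the space of Markov
traces is one-dimensional, determined by the value `t_1(1)`. -/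
theorem hecke_markov_trace_inclusion_and_unique (C : Type) [CommRing C]
    (a q z : Cˣ) (hz : (z : C) = (q : C) - ((q⁻¹ : Cˣ) : C))
    (t : ∀ m : ℕ, Hecke C (z : C) m →ₗ[C] C)
    (ht : IsHeckeMarkovTrace a (z : C) t) :
    (∀ (m : ℕ) (u : Hecke C (z : C) m),
      t (m + 1) (Hecke.ιle (Nat.le_succ m) u)
        = (((a : C) - ((a⁻¹ : Cˣ) : C)) * ((z⁻¹ : Cˣ) : C)) * t m u) ∧
    (∀ t' : ∀ m : ℕ, Hecke C (z : C) m →ₗ[C] C,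
      IsHeckeMarkovTrace a (z : C) t' → t' 0 1 = t 0 1 → t' = t) := by
  constructor
  · exact markov_trace_inclusion a z t ht
  · intro t' ht' h0
    funext m
    induction m with
    | zero =>
        ext x
        obtain ⟨c, rfl⟩ := Hecke.exists_algebraMap x
        rw [Algebra.algebraMap_eq_smul_one, map_smul, map_smul, h0]
    | succ k ih =>
        ext x
        have hx : x ∈ Hecke.markovSpan (z := (z : C)) k := by
          rw [Hecke.markovSpan_eq_top]; exact Submodule.mem_top
        induction hx using Submodule.span_induction with
        | mem x hxm =>
            rcases hxm with ⟨u, rfl⟩ | ⟨v, w, rfl⟩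
            · rw [markov_trace_inclusion a z t' ht', markov_trace_inclusion a z t ht, ih]
            · rw [ht'.2.1 k v w, ht.2.1 k v w, ih]
        | zero => rw [map_zero, map_zero]
        | add x₁ x₂ _ _ h1 h2 => rw [map_add, map_add, h1, h2]
        | smul c x _ h1 => rw [map_smul, map_smul, h1]

end
end

section
/- Let (t_n) be a family of linear maps on the tower of BMW algebras satisfying the stabilization property t_{n+1}(u s_n^{±1} v) = a^{±1} t_n(uv) and the inclusion property t_{n+1}(ι_n(u)) = δ t_n(u) with δ = (a−a^{−1})/(q−q^{−1}) + 1. Then for all k, l ∈ ℤ and u, v, w ∈ BMW_{n−1}, t_{n+1}(u s_{n−1}^k v s_n^l w) = t_{n+1}(u s_{n−1}^l v s_n^k w). -/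
noncomputable section

open FreeAlgebra

variable {C : Type} [CommRing C] {a z : Cˣ} {n : ℕ}

/-- A family of linear maps on the tower of BMW algebras satisfying the (positive and
negative) stabilization property and the inclusion property with parameter `d`. -/
def IsBMWStabIncl {C : Type} [CommRing C] (a z : Cˣ) (d : C)
    (t : ∀ m : ℕ, BMW C a z m →ₗ[C] C) : Prop :=
  (∀ (m : ℕ) (u v : BMW C a z m),
    t (m + 1) (BMW.ιle (Nat.le_succ m) u * BMW.S (Fin.last m) *
        BMW.ιle (Nat.le_succ m) v) = (a : C) * t m (u * v)) ∧
  (∀ (m : ℕ) (u v : BMW C a z m),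
    t (m + 1) (BMW.ιle (Nat.le_succ m) u * BMW.Sinv (Fin.last m) *
        BMW.ιle (Nat.le_succ m) v) = ((a⁻¹ : Cˣ) : C) * t m (u * v)) ∧
  (∀ (m : ℕ) (u : BMW C a z m),
    t (m + 1) (BMW.ιle (Nat.le_succ m) u) = d * t m u)

lemma BMW.ιle_S {m n : ℕ} (h : m ≤ n) (i : Fin m) :
    BMW.ιle (C := C) (a := a) (z := z) h (BMW.S i) = BMW.S (Fin.castLE h i) := by
  simp [BMW.ιle, BMW.S, RingQuot.liftAlgHom_mkAlgHom_apply]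

lemma BMW.ιle_Sinv {m n : ℕ} (h : m ≤ n) (i : Fin m) :
    BMW.ιle (C := C) (a := a) (z := z) h (BMW.Sinv i) = BMW.Sinv (Fin.castLE h i) := by
  simp [BMW.ιle, BMW.Sinv, RingQuot.liftAlgHom_mkAlgHom_apply]

lemma BMW.ιle_ιle {k m n : ℕ} (h1 : k ≤ m) (h2 : m ≤ n) (x : BMW C a z k) :
    BMW.ιle (a := a) (z := z) h2 (BMW.ιle h1 x) = BMW.ιle (h1.trans h2) x := by
  have : (BMW.ιle (a := a) (z := z) h2).comp (BMW.ιle h1) = BMW.ιle (h1.trans h2) := by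
    apply RingQuot.ringQuot_ext'
    apply FreeAlgebra.hom_ext
    funext i
    rcases i with i | i
    · show BMW.ιle (a := a) (z := z) h2 (BMW.ιle h1 (BMW.S i)) = BMW.ιle _ (BMW.S i)
      rw [BMW.ιle_S, BMW.ιle_S, BMW.ιle_S]; rfl
    · show BMW.ιle (a := a) (z := z) h2 (BMW.ιle h1 (BMW.Sinv i)) = BMW.ιle _ (BMW.Sinv i)
      rw [BMW.ιle_Sinv, BMW.ιle_Sinv, BMW.ιle_Sinv]; rfl
  exact congrFun (congrArg (fun f => f.toFun) this) x

lemma BMW.S_sq (i : Fin n) :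
    BMW.S (a := a) (z := z) i * BMW.S i =
      (1 - ((a⁻¹ : Cˣ) : C) * (z : C)) • 1 + ((z : C) + ((a⁻¹ : Cˣ) : C)) • BMW.S i
        + (-((a⁻¹ : Cˣ) : C)) • BMW.Sinv i := by
  have h := BMW.Es (a := a) (z := z) i
  rw [add_mul, sub_mul, smul_mul_assoc, one_mul, BMW.Sinv_mul_S] at h
  linear_combination (norm := module) -h

lemma BMW.Sinv_sq (i : Fin n) :
    BMW.Sinv (a := a) (z := z) i * BMW.Sinv i =
      ((a : C) * (z : C) + 1) • 1 + (-(a : C)) • BMW.S i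
        + ((a : C) - (z : C)) • BMW.Sinv i := by
  have h := congrArg (fun x => x * BMW.Sinv (a := a) (z := z) i) (BMW.S_sq i)
  simp only [add_mul, smul_mul_assoc, one_mul, mul_assoc, BMW.S_mul_Sinv, mul_one] at h
  have ha : (a : C) * ((a⁻¹ : Cˣ) : C) = 1 := by
    rw [← Units.val_mul, mul_inv_cancel, Units.val_one]
  have h5 : ((a⁻¹ : Cˣ) : C) • (BMW.Sinv (a := a) (z := z) i * BMW.Sinv i)
      = (1 - ((a⁻¹ : Cˣ) : C) * (z : C)) • BMW.Sinv i
        + ((z : C) + ((a⁻¹ : Cˣ) : C)) • 1 - BMW.S i := by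
    linear_combination (norm := module) h
  rw [← one_smul C (BMW.Sinv (a := a) (z := z) i * BMW.Sinv i), ← ha, mul_smul, h5]
  match_scalars <;>
    first
      | ring1
      | linear_combination ha
      | linear_combination (-(z : C)) * ha
      | linear_combination ((z : C)) * ha
      | linear_combination (-(1 : C)) * ha

lemma BMW.sU_zpow_combo (k : ℤ) : ∃ α β γ : C, ∀ (N : ℕ) (i : Fin N),
    ((BMW.sU (a := a) (z := z) i ^ k : (BMW C a z N)ˣ) : BMW C a z N)
      = α • 1 + β • BMW.S i + γ • BMW.Sinv i := by
  induction k using Int.induction_on with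
  | zero => exact ⟨1, 0, 0, by simp⟩
  | succ n ih =>
    obtain ⟨α, β, γ, ih⟩ := ih
    refine ⟨γ + β * (1 - ((a⁻¹ : Cˣ) : C) * (z : C)),
      α + β * ((z : C) + ((a⁻¹ : Cˣ) : C)), β * (-((a⁻¹ : Cˣ) : C)), fun N i => ?_⟩
    rw [zpow_add_one, Units.val_mul, ih]
    show (α • 1 + β • BMW.S i + γ • BMW.Sinv i) * BMW.S i = _
    rw [add_mul, add_mul, smul_mul_assoc, smul_mul_assoc, smul_mul_assoc, one_mul,
      BMW.Sinv_mul_S, BMW.S_sq]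
    module
  | pred n ih =>
    obtain ⟨α, β, γ, ih⟩ := ih
    refine ⟨β + γ * ((a : C) * (z : C) + 1), γ * (-(a : C)),
      α + γ * ((a : C) - (z : C)), fun N i => ?_⟩
    rw [zpow_sub_one, Units.val_mul, ih]
    show (α • 1 + β • BMW.S i + γ • BMW.Sinv i) * BMW.Sinv i = _
    rw [add_mul, add_mul, smul_mul_assoc, smul_mul_assoc, smul_mul_assoc, one_mul,
      BMW.S_mul_Sinv, BMW.Sinv_sq]
    module

/-- The key computation: if the middle elements `A'` (coming from `BMW (m+1)`) and `B`
absorb into the trace with constants `cA`, `cB`, then the whole expression computes. -/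
lemma bmw_core (d : C) (t : ∀ m : ℕ, BMW C a z m →ₗ[C] C)
    (m : ℕ) (A : BMW C a z (m + 1)) (A' : BMW C a z (m + 2)) (cA : C)
    (hmid : A' = BMW.ιle (Nat.le_succ (m + 1)) A)
    (hA : ∀ u v : BMW C a z m,
      t (m + 1) (BMW.ιle (Nat.le_succ m) u * A * BMW.ιle (Nat.le_succ m) v)
        = cA * t m (u * v))
    (B : BMW C a z (m + 2)) (cB : C)
    (hB : ∀ x y : BMW C a z (m + 1),
      t (m + 2) (BMW.ιle (Nat.le_succ (m + 1)) x * B * BMW.ιle (Nat.le_succ (m + 1)) y)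
        = cB * t (m + 1) (x * y))
    (u v w : BMW C a z m) :
    t (m + 2) (BMW.ιle (m.le_add_right 2) u * A' * BMW.ιle (m.le_add_right 2) v * B *
        BMW.ιle (m.le_add_right 2) w)
      = cA * cB * t m (u * (v * w)) := by
  have hu : BMW.ιle (a := a) (z := z) (m.le_add_right 2) u
      = BMW.ιle (Nat.le_succ (m + 1)) (BMW.ιle (Nat.le_succ m) u) := (BMW.ιle_ιle _ _ u).symm
  have hv : BMW.ιle (a := a) (z := z) (m.le_add_right 2) v
      = BMW.ιle (Nat.le_succ (m + 1)) (BMW.ιle (Nat.le_succ m) v) := (BMW.ιle_ιle _ _ v).symm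
  have hw : BMW.ιle (a := a) (z := z) (m.le_add_right 2) w
      = BMW.ιle (Nat.le_succ (m + 1)) (BMW.ιle (Nat.le_succ m) w) := (BMW.ιle_ιle _ _ w).symm
  rw [hu, hv, hw, hmid, ← map_mul, ← map_mul, hB, mul_assoc, ← map_mul, hA]
  ring

/-- If `(t_n)` satisfies stabilization and inclusion (with
`d = δ = (a−a⁻¹)/(q−q⁻¹) + 1`) then for all `k, l ∈ ℤ` and `u, v, w ∈ BMW_{n−1}`,
`t_{n+1}(u s_{n−1}^k v s_n^l w) = t_{n+1}(u s_{n−1}^l v s_n^k w)`. -/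
theorem bmw_stab_incl_swap_powers (C : Type) [CommRing C] (a q z : Cˣ)
    (hz : (z : C) = (q : C) - ((q⁻¹ : Cˣ) : C))
    (t : ∀ m : ℕ, BMW C a z m →ₗ[C] C)
    (ht : IsBMWStabIncl a z
      (((a : C) - ((a⁻¹ : Cˣ) : C)) * ((z⁻¹ : Cˣ) : C) + 1) t) :
    ∀ (m : ℕ) (k l : ℤ) (u v w : BMW C a z m),
      t (m + 2) (BMW.ιle (by omega) u *
          ((BMW.sU (⟨m, by omega⟩ : Fin (m + 2)) ^ k : (BMW C a z (m + 2))ˣ) : BMW C a z (m + 2)) *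
          BMW.ιle (by omega) v *
          ((BMW.sU (⟨m + 1, by omega⟩ : Fin (m + 2)) ^ l : (BMW C a z (m + 2))ˣ) : BMW C a z (m + 2)) *
          BMW.ιle (by omega) w)
        = t (m + 2) (BMW.ιle (by omega) u *
            ((BMW.sU (⟨m, by omega⟩ : Fin (m + 2)) ^ l : (BMW C a z (m + 2))ˣ) : BMW C a z (m + 2)) *
            BMW.ιle (by omega) v *
            ((BMW.sU (⟨m + 1, by omega⟩ : Fin (m + 2)) ^ k : (BMW C a z (m + 2))ˣ) : BMW C a z (m + 2)) *
            BMW.ιle (by omega) w) := by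
  intro m k l u v w
  set d : C := ((a : C) - ((a⁻¹ : Cˣ) : C)) * ((z⁻¹ : Cˣ) : C) + 1 with hd
  obtain ⟨ht1, ht2, ht3⟩ := ht
  -- absorption facts at level m
  have hA1 : ∀ u v : BMW C a z m,
      t (m + 1) (BMW.ιle (Nat.le_succ m) u * 1 * BMW.ιle (Nat.le_succ m) v)
        = d * t m (u * v) := by
    intro u v; rw [mul_one, ← map_mul]; exact ht3 m (u * v)
  have hA2 : ∀ u v : BMW C a z m,
      t (m + 1) (BMW.ιle (Nat.le_succ m) u * BMW.S (Fin.last m) * BMW.ιle (Nat.le_succ m) v)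
        = (a : C) * t m (u * v) := ht1 m
  have hA3 : ∀ u v : BMW C a z m,
      t (m + 1) (BMW.ιle (Nat.le_succ m) u * BMW.Sinv (Fin.last m) * BMW.ιle (Nat.le_succ m) v)
        = ((a⁻¹ : Cˣ) : C) * t m (u * v) := ht2 m
  -- absorption facts at level m+1
  have hB1 : ∀ x y : BMW C a z (m + 1),
      t (m + 2) (BMW.ιle (Nat.le_succ (m + 1)) x * 1 * BMW.ιle (Nat.le_succ (m + 1)) y)
        = d * t (m + 1) (x * y) := by
    intro x y; rw [mul_one, ← map_mul]; exact ht3 (m + 1) (x * y)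
  have hB2 : ∀ x y : BMW C a z (m + 1),
      t (m + 2) (BMW.ιle (Nat.le_succ (m + 1)) x * BMW.S (⟨m + 1, by omega⟩ : Fin (m + 2)) *
          BMW.ιle (Nat.le_succ (m + 1)) y) = (a : C) * t (m + 1) (x * y) := ht1 (m + 1)
  have hB3 : ∀ x y : BMW C a z (m + 1),
      t (m + 2) (BMW.ιle (Nat.le_succ (m + 1)) x * BMW.Sinv (⟨m + 1, by omega⟩ : Fin (m + 2)) *
          BMW.ιle (Nat.le_succ (m + 1)) y) = ((a⁻¹ : Cˣ) : C) * t (m + 1) (x * y) := ht2 (m + 1)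
  -- middle identifications
  have hm1 : (1 : BMW C a z (m + 2)) = BMW.ιle (Nat.le_succ (m + 1)) 1 := (map_one _).symm
  have hm2 : BMW.S (a := a) (z := z) (⟨m, by omega⟩ : Fin (m + 2))
      = BMW.ιle (Nat.le_succ (m + 1)) (BMW.S (Fin.last m)) := by
    rw [BMW.ιle_S]; rfl
  have hm3 : BMW.Sinv (a := a) (z := z) (⟨m, by omega⟩ : Fin (m + 2))
      = BMW.ιle (Nat.le_succ (m + 1)) (BMW.Sinv (Fin.last m)) := by
    rw [BMW.ιle_Sinv]; rfl
  have c11 := bmw_core d t m 1 1 d hm1 hA1 1 d hB1 u v w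
  have c12 := bmw_core d t m 1 1 d hm1 hA1 _ (a : C) hB2 u v w
  have c13 := bmw_core d t m 1 1 d hm1 hA1 _ ((a⁻¹ : Cˣ) : C) hB3 u v w
  have c21 := bmw_core d t m _ _ (a : C) hm2 hA2 1 d hB1 u v w
  have c22 := bmw_core d t m _ _ (a : C) hm2 hA2 _ (a : C) hB2 u v w
  have c23 := bmw_core d t m _ _ (a : C) hm2 hA2 _ ((a⁻¹ : Cˣ) : C) hB3 u v w
  have c31 := bmw_core d t m _ _ ((a⁻¹ : Cˣ) : C) hm3 hA3 1 d hB1 u v w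
  have c32 := bmw_core d t m _ _ ((a⁻¹ : Cˣ) : C) hm3 hA3 _ (a : C) hB2 u v w
  have c33 := bmw_core d t m _ _ ((a⁻¹ : Cˣ) : C) hm3 hA3 _ ((a⁻¹ : Cˣ) : C) hB3 u v w
  obtain ⟨αk, βk, γk, hk⟩ := BMW.sU_zpow_combo (a := a) (z := z) (C := C) k
  obtain ⟨αl, βl, γl, hl⟩ := BMW.sU_zpow_combo (a := a) (z := z) (C := C) l
  simp only [hk, hl]
  simp only [mul_add, add_mul, smul_mul_assoc, mul_smul_comm, map_add, map_smul, smul_smul,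
    smul_eq_mul]
  rw [c11, c12, c13, c21, c22, c23, c31, c32, c33]
  ring

end
end
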